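/- Let E be a normed space, F a normed L-space, and equip E ⊗ F with the norm transported from E ⊗_π (L ⊗ F) via the flip isomorphism β : L ⊗ (E ⊗ F) → E ⊗ (L ⊗ F), ξ ⊗ (x ⊗ y) ↦ x ⊗ (ξ ⊗ y). Then this is an L-norm on E ⊗ F whose underlying norm on E ⊗ F coincides with the projective tensor norm: for every u ∈ E ⊗ F and every unit vector ξ ∈ L, ‖β(ξ ⊗ u)‖_{E ⊗_π (L⊗F)} = ‖u‖_{E ⊗_π F}. -/

import Mathlib

open TensorProduct

/-- For a normed space `E` and a normed `L`-space `F`, the norm transported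
to `L ⊗ (E ⊗ F)` from `E ⊗_π (L ⊗ F)` via the flip `β : ξ ⊗ (x ⊗ y) ↦ x ⊗ (ξ ⊗ y)`
is an `L`-norm on `E ⊗ F` whose underlying norm is the projective tensor norm. -/

lemma auxDecomp {R M N : Type*} [CommRing R] [AddCommGroup M] [AddCommGroup N]
    [Module R M] [Module R N] (w : M ⊗[R] N) :
    ∃ (n : ℕ) (x : Fin n → M) (v : Fin n → N), w = ∑ i, x i ⊗ₜ[R] v i := by
  induction w using TensorProduct.induction_on with
  | zero => exact ⟨0, ![], ![], by simp⟩
  | tmul x v => exact ⟨1, ![x], ![v], by simp⟩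
  | add w1 w2 h1 h2 =>
    obtain ⟨n1, x1, v1, h1⟩ := h1
    obtain ⟨n2, x2, v2, h2⟩ := h2
    refine ⟨n1 + n2, Fin.append x1 x2, Fin.append v1 v2, ?_⟩
    rw [Fin.sum_univ_add]
    simp [h1, h2, Fin.append_left, Fin.append_right]

lemma auxSep {E V : Type*} [NormedAddCommGroup E] [NormedSpace ℂ E]
    [AddCommGroup V] [Module ℂ V] (w : E ⊗[ℂ] V) (hw : w ≠ 0) :
    ∃ f : E →L[ℂ] ℂ,
      TensorProduct.lift ((LinearMap.lsmul ℂ V).comp (f : E →ₗ[ℂ] ℂ)) w ≠ 0 := by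
  classical
  by_contra h
  push_neg at h
  apply hw
  let b := Module.Basis.ofVectorSpace ℂ V
  set ι := Module.Basis.ofVectorSpaceIndex ℂ V
  let e : E ⊗[ℂ] V ≃ₗ[ℂ] (ι →₀ E) :=
    (TensorProduct.congr (LinearEquiv.refl ℂ E) b.repr).trans
      (TensorProduct.finsuppScalarRight ℂ ℂ E ι)
  have key : ∀ (f : E →L[ℂ] ℂ) (j : ι) (u : E ⊗[ℂ] V),
      f (e u j) = b.repr (TensorProduct.lift ((LinearMap.lsmul ℂ V).comp (f : E →ₗ[ℂ] ℂ)) u) j := by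
    intro f j u
    induction u using TensorProduct.induction_on with
    | zero => simp
    | tmul x v =>
      simp [e, TensorProduct.congr_tmul, TensorProduct.finsuppScalarRight_apply_tmul_apply,
        TensorProduct.lift.tmul, mul_comm]
    | add u1 u2 h1 h2 => simp [map_add, h1, h2]
  have hz : ∀ j : ι, e w j = 0 := by
    intro j
    apply NormedSpace.eq_zero_of_forall_dual_eq_zero ℂ
    intro f
    rw [key f j w, h f]
    simp
  have : e w = 0 := Finsupp.ext hz
  exact e.map_eq_zero_iff.mp this

set_option maxHeartbeats 2000000 in
theorem projective_quantization
    (L E F : Type*) [NormedAddCommGroup L] [NormedSpace ℂ L] [Nontrivial L]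
    [NormedAddCommGroup E] [NormedSpace ℂ E]
    [NormedAddCommGroup F] [NormedSpace ℂ F]
    (M : L ⊗[ℂ] F → ℝ)
    (hM0 : ∀ v : L ⊗[ℂ] F, M v = 0 ↔ v = 0)
    (hMadd : ∀ v w : L ⊗[ℂ] F, M (v + w) ≤ M v + M w)
    (hMsmul : ∀ (c : ℂ) (v : L ⊗[ℂ] F), M (c • v) = ‖c‖ * M v)
    (hMcontr : ∀ (a : L →L[ℂ] L) (v : L ⊗[ℂ] F),
      M (LinearMap.rTensor F (a : L →ₗ[ℂ] L) v) ≤ ‖a‖ * M v)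
    (hMund : ∀ (ξ : L) (y : F), ‖ξ‖ = 1 → M (ξ ⊗ₜ[ℂ] y) = ‖y‖)
    -- the projective norm on `E ⊗ (L ⊗ F)`, with `M` as the norm on the second factor
    (pn : E ⊗[ℂ] (L ⊗[ℂ] F) → ℝ)
    (hpn : ∀ w : E ⊗[ℂ] (L ⊗[ℂ] F), pn w = sInf {r : ℝ |
      ∃ (n : ℕ) (x : Fin n → E) (v : Fin n → L ⊗[ℂ] F),
        w = ∑ i, x i ⊗ₜ[ℂ] v i ∧ r = ∑ i, ‖x i‖ * M (v i)})
    -- the projective norm on `E ⊗ F`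
    (pf : E ⊗[ℂ] F → ℝ)
    (hpf : ∀ w : E ⊗[ℂ] F, pf w = sInf {r : ℝ |
      ∃ (n : ℕ) (x : Fin n → E) (y : Fin n → F),
        w = ∑ i, x i ⊗ₜ[ℂ] y i ∧ r = ∑ i, ‖x i‖ * ‖y i‖})
    -- the flip isomorphism β
    (β : L ⊗[ℂ] (E ⊗[ℂ] F) ≃ₗ[ℂ] E ⊗[ℂ] (L ⊗[ℂ] F))
    (hβ : ∀ (ξ : L) (x : E) (y : F), β (ξ ⊗ₜ[ℂ] (x ⊗ₜ[ℂ] y)) = x ⊗ₜ[ℂ] (ξ ⊗ₜ[ℂ] y)) :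
    -- the transported norm `N U := pn (β U)` is an `L`-norm on `E ⊗ F` ...
    (∀ U : L ⊗[ℂ] (E ⊗[ℂ] F), pn (β U) = 0 ↔ U = 0) ∧
    (∀ U V : L ⊗[ℂ] (E ⊗[ℂ] F), pn (β (U + V)) ≤ pn (β U) + pn (β V)) ∧
    (∀ (c : ℂ) (U : L ⊗[ℂ] (E ⊗[ℂ] F)), pn (β (c • U)) = ‖c‖ * pn (β U)) ∧
    (∀ (a : L →L[ℂ] L) (U : L ⊗[ℂ] (E ⊗[ℂ] F)),
      pn (β (LinearMap.rTensor (E ⊗[ℂ] F) (a : L →ₗ[ℂ] L) U)) ≤ ‖a‖ * pn (β U)) ∧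
    -- ... whose underlying norm is the projective tensor norm on `E ⊗ F`
    (∀ (ξ : L) (u : E ⊗[ℂ] F), ‖ξ‖ = 1 → pn (β (ξ ⊗ₜ[ℂ] u)) = pf u) := by
  classical
  -- basic facts about M
  have M0 : M 0 = 0 := by
    have := hMsmul 0 0
    simpa using this
  have Mneg : ∀ v, M (-v) = M v := by
    intro v
    have := hMsmul (-1) v
    simpa using this
  have Mnn : ∀ v, 0 ≤ M v := by
    intro v
    have h := hMadd v (-v)
    rw [add_neg_cancel, M0, Mneg] at h
    linarith
  have Msum : ∀ (n : ℕ) (v : Fin n → L ⊗[ℂ] F), M (∑ i, v i) ≤ ∑ i, M (v i) := by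
    intro n
    induction n with
    | zero => intro v; simp [M0]
    | succ m ih =>
      intro v
      rw [Fin.sum_univ_castSucc, Fin.sum_univ_castSucc]
      exact (hMadd _ _).trans (by linarith [ih (fun i => v i.castSucc)])
  -- the defining set for pn
  set S : E ⊗[ℂ] (L ⊗[ℂ] F) → Set ℝ := fun w => {r : ℝ |
      ∃ (n : ℕ) (x : Fin n → E) (v : Fin n → L ⊗[ℂ] F),
        w = ∑ i, x i ⊗ₜ[ℂ] v i ∧ r = ∑ i, ‖x i‖ * M (v i)} with hS
  have hpn' : ∀ w, pn w = sInf (S w) := hpn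
  have hSne : ∀ w, (S w).Nonempty := by
    intro w
    obtain ⟨n, x, v, hxv⟩ := auxDecomp w
    exact ⟨∑ i, ‖x i‖ * M (v i), n, x, v, hxv, rfl⟩
  have hSnn : ∀ w, ∀ r ∈ S w, (0:ℝ) ≤ r := by
    rintro w r ⟨n, x, v, -, rfl⟩
    exact Finset.sum_nonneg fun i _ => mul_nonneg (norm_nonneg _) (Mnn _)
  have hSbdd : ∀ w, BddBelow (S w) := fun w => ⟨0, fun r hr => hSnn w r hr⟩
  have pn_le : ∀ w, ∀ r ∈ S w, pn w ≤ r := by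
    intro w r hr; rw [hpn']; exact csInf_le (hSbdd w) hr
  have le_pn : ∀ w c, (∀ r ∈ S w, c ≤ r) → c ≤ pn w := by
    intro w c hc; rw [hpn']; exact le_csInf (hSne w) hc
  have pn_nonneg : ∀ w, 0 ≤ pn w := fun w => le_pn w 0 (hSnn w)
  have pn_zero : pn 0 = 0 := by
    have h1 : (0:ℝ) ∈ S 0 := ⟨0, ![], ![], by simp, by simp⟩
    exact le_antisymm (pn_le 0 0 h1) (pn_nonneg 0)
  -- definiteness of pn
  have pn_def : ∀ w, pn w = 0 → w = 0 := by
    intro w h0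
    by_contra hw
    obtain ⟨f, hf⟩ := auxSep w hw
    set g := TensorProduct.lift ((LinearMap.lsmul ℂ (L ⊗[ℂ] F)).comp (f : E →ₗ[ℂ] ℂ)) with hg
    have hMg : 0 < M (g w) := lt_of_le_of_ne (Mnn _) fun h => hf ((hM0 _).mp h.symm)
    have hbound : ∀ r ∈ S w, M (g w) ≤ ‖f‖ * r := by
      rintro r ⟨n, x, v, hxv, rfl⟩
      have hgw : g w = ∑ i, f (x i) • v i := by
        rw [hxv, map_sum]
        simp [hg, TensorProduct.lift.tmul]
      rw [hgw, Finset.mul_sum]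
      refine (Msum n _).trans (Finset.sum_le_sum fun i _ => ?_)
      rw [hMsmul]
      have h1 : ‖f (x i)‖ ≤ ‖f‖ * ‖x i‖ := f.le_opNorm _
      have h2 : 0 ≤ M (v i) := Mnn _
      nlinarith
    set ε := M (g w) / (‖f‖ + 1) with hε
    have hεpos : 0 < ε := div_pos hMg (by positivity)
    have : sInf (S w) < ε := by rw [← hpn', h0]; exact hεpos
    obtain ⟨r, hr, hrε⟩ := exists_lt_of_csInf_lt (hSne w) this
    have h1 : M (g w) ≤ ‖f‖ * r := hbound r hr
    have h2 : ‖f‖ * r ≤ (‖f‖ + 1) * r := by nlinarith [hSnn w r hr]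
    have h3 : (‖f‖ + 1) * r < (‖f‖ + 1) * ε := by
      apply mul_lt_mul_of_pos_left hrε (by positivity)
    have h4 : (‖f‖ + 1) * ε = M (g w) := by
      rw [hε, mul_comm]; exact div_mul_cancel₀ _ (by positivity)
    linarith
  -- concatenation: triangle inequality
  have Sadd : ∀ w1 w2, ∀ r1 ∈ S w1, ∀ r2 ∈ S w2, r1 + r2 ∈ S (w1 + w2) := by
    rintro w1 w2 r1 ⟨n1, x1, v1, hx1, rfl⟩ r2 ⟨n2, x2, v2, hx2, rfl⟩
    refine ⟨n1 + n2, Fin.append x1 x2, Fin.append v1 v2, ?_, ?_⟩ <;>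
      rw [Fin.sum_univ_add] <;>
      simp [hx1, hx2, Fin.append_left, Fin.append_right]
  have pn_add : ∀ w1 w2, pn (w1 + w2) ≤ pn w1 + pn w2 := by
    intro w1 w2
    have key : ∀ r1 ∈ S w1, ∀ r2 ∈ S w2, pn (w1 + w2) ≤ r1 + r2 := fun r1 h1 r2 h2 =>
      pn_le _ _ (Sadd w1 w2 r1 h1 r2 h2)
    have h1 : ∀ r1 ∈ S w1, pn (w1 + w2) - r1 ≤ pn w2 := fun r1 h =>
      le_pn _ _ fun r2 h2 => by linarith [key r1 h r2 h2]
    have h2 : pn (w1 + w2) - pn w2 ≤ pn w1 :=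
      le_pn _ _ fun r1 h => by linarith [h1 r1 h]
    linarith
  -- scalar homogeneity
  have Ssmul : ∀ (c : ℂ) w, ∀ r ∈ S w, ‖c‖ * r ∈ S (c • w) := by
    rintro c w r ⟨n, x, v, hxv, rfl⟩
    refine ⟨n, fun i => c • x i, v, ?_, ?_⟩
    · rw [hxv, Finset.smul_sum]
      simp [TensorProduct.smul_tmul']
    · rw [Finset.mul_sum]
      congr 1 with i
      rw [norm_smul]; ring
  have pn_smul_le : ∀ (c : ℂ) w, pn (c • w) ≤ ‖c‖ * pn w := by
    intro c w
    rcases eq_or_ne c 0 with rfl | hc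
    · simp [pn_zero]
    · have hcpos : (0:ℝ) < ‖c‖ := norm_pos_iff.mpr hc
      have h1 : ∀ r ∈ S w, pn (c • w) / ‖c‖ ≤ r := fun r hr => by
        rw [div_le_iff₀ hcpos]
        have := pn_le _ _ (Ssmul c w r hr)
        linarith [this]
      have h2 := le_pn w _ h1
      rw [div_le_iff₀ hcpos] at h2
      linarith [h2]
  have pn_smul : ∀ (c : ℂ) w, pn (c • w) = ‖c‖ * pn w := by
    intro c w
    rcases eq_or_ne c 0 with rfl | hc
    · simp [pn_zero]
    · refine le_antisymm (pn_smul_le c w) ?_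
      have h1 : pn w ≤ ‖c⁻¹‖ * pn (c • w) := by
        have := pn_smul_le c⁻¹ (c • w)
        rwa [smul_smul, inv_mul_cancel₀ hc, one_smul] at this
      have h2 : ‖c⁻¹‖ = ‖c‖⁻¹ := norm_inv c
      have hcpos : (0:ℝ) < ‖c‖ := norm_pos_iff.mpr hc
      rw [h2] at h1
      calc ‖c‖ * pn w ≤ ‖c‖ * (‖c‖⁻¹ * pn (c • w)) := by
            apply mul_le_mul_of_nonneg_left h1 hcpos.le
        _ = pn (c • w) := by rw [← mul_assoc, mul_inv_cancel₀ hcpos.ne', one_mul]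
  -- contraction property
  have hcomm : ∀ (a : L →L[ℂ] L) (U : L ⊗[ℂ] (E ⊗[ℂ] F)),
      β (LinearMap.rTensor (E ⊗[ℂ] F) (a : L →ₗ[ℂ] L) U) =
      LinearMap.lTensor E (LinearMap.rTensor F (a : L →ₗ[ℂ] L)) (β U) := by
    intro a U
    induction U using TensorProduct.induction_on with
    | zero => simp
    | add U1 U2 h1 h2 => simp only [map_add, h1, h2]
    | tmul ξ u =>
      induction u using TensorProduct.induction_on with
      | zero => simp [TensorProduct.tmul_zero]
      | add u1 u2 h1 h2 =>
        simp only [TensorProduct.tmul_add, map_add, h1, h2]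
      | tmul x y =>
        rw [LinearMap.rTensor_tmul, hβ, hβ, LinearMap.lTensor_tmul, LinearMap.rTensor_tmul]
  have pn_contr : ∀ (a : L →L[ℂ] L) (w : E ⊗[ℂ] (L ⊗[ℂ] F)),
      pn (LinearMap.lTensor E (LinearMap.rTensor F (a : L →ₗ[ℂ] L)) w) ≤ ‖a‖ * pn w := by
    intro a w
    have key : ∀ r ∈ S w, pn (LinearMap.lTensor E (LinearMap.rTensor F (a : L →ₗ[ℂ] L)) w)
        ≤ ‖a‖ * r := by
      rintro r ⟨n, x, v, hxv, rfl⟩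
      have hmem : (∑ i, ‖x i‖ * M (LinearMap.rTensor F (a : L →ₗ[ℂ] L) (v i))) ∈
          S (LinearMap.lTensor E (LinearMap.rTensor F (a : L →ₗ[ℂ] L)) w) := by
        refine ⟨n, x, fun i => LinearMap.rTensor F (a : L →ₗ[ℂ] L) (v i), ?_, rfl⟩
        rw [hxv, map_sum]
        simp [LinearMap.lTensor_tmul]
      refine (pn_le _ _ hmem).trans ?_
      rw [Finset.mul_sum]
      refine Finset.sum_le_sum fun i _ => ?_
      have h1 := hMcontr a (v i)
      have h2 : (0:ℝ) ≤ ‖x i‖ := norm_nonneg _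
      nlinarith [Mnn (v i), norm_nonneg a]
    rcases (norm_nonneg a).eq_or_lt' with h0 | hpos
    · have e1 : ‖a‖ = 0 := h0
      obtain ⟨r, hr⟩ := hSne w
      have h := key r hr
      rw [e1, zero_mul] at h ⊢
      exact h
    · have h1 : ∀ r ∈ S w,
          pn (LinearMap.lTensor E (LinearMap.rTensor F (a : L →ₗ[ℂ] L)) w) / ‖a‖ ≤ r :=
        fun r hr => by rw [div_le_iff₀ hpos]; linarith [key r hr]
      have h2 := le_pn w _ h1
      rw [div_le_iff₀ hpos] at h2
      linarith
  refine ⟨?_, ?_, ?_, ?_, ?_⟩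
  · intro U
    constructor
    · intro h
      have := pn_def (β U) h
      exact β.injective (by simpa using this)
    · rintro rfl
      simpa using pn_zero
  · intro U V
    rw [map_add]
    exact pn_add _ _
  · intro c U
    rw [β.map_smul]
    exact pn_smul c (β U)
  · intro a U
    rw [hcomm a U]
    exact pn_contr a (β U)
  · -- underlying norm
    intro ξ u hξ
    have hξ0 : ξ ≠ 0 := fun h => by simp [h] at hξ
    -- pf facts
    have hSfnn : ∀ (w : E ⊗[ℂ] F) r, r ∈ {r : ℝ | ∃ (n : ℕ) (x : Fin n → E) (y : Fin n → F),
        w = ∑ i, x i ⊗ₜ[ℂ] y i ∧ r = ∑ i, ‖x i‖ * ‖y i‖} → 0 ≤ r := by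
      rintro w r ⟨n, x, y, -, rfl⟩
      exact Finset.sum_nonneg fun i _ => mul_nonneg (norm_nonneg _) (norm_nonneg _)
    have hSfne : ∀ w : E ⊗[ℂ] F, {r : ℝ | ∃ (n : ℕ) (x : Fin n → E) (y : Fin n → F),
        w = ∑ i, x i ⊗ₜ[ℂ] y i ∧ r = ∑ i, ‖x i‖ * ‖y i‖}.Nonempty := by
      intro w
      obtain ⟨n, x, y, hxy⟩ := auxDecomp w
      exact ⟨∑ i, ‖x i‖ * ‖y i‖, n, x, y, hxy, rfl⟩
    -- β (ξ ⊗ u) written with decompositions of u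
    have hβsum : ∀ (n : ℕ) (x : Fin n → E) (y : Fin n → F),
        β (ξ ⊗ₜ[ℂ] (∑ i, x i ⊗ₜ[ℂ] y i)) = ∑ i, x i ⊗ₜ[ℂ] (ξ ⊗ₜ[ℂ] y i) := by
      intro n x y
      rw [TensorProduct.tmul_sum, map_sum]
      exact Finset.sum_congr rfl fun i _ => hβ ξ (x i) (y i)
    refine le_antisymm ?_ ?_
    · -- pn (β (ξ ⊗ u)) ≤ pf u
      rw [hpf]
      refine le_csInf (hSfne u) ?_
      rintro r ⟨n, x, y, hxy, rfl⟩
      have hmem : (∑ i, ‖x i‖ * ‖y i‖) ∈ S (β (ξ ⊗ₜ[ℂ] u)) := by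
        refine ⟨n, x, fun i => ξ ⊗ₜ[ℂ] y i, ?_, ?_⟩
        · rw [hxy]; exact hβsum n x y
        · exact Finset.sum_congr rfl fun i _ => by rw [hMund ξ (y i) hξ]
      exact pn_le _ _ hmem
    · -- pf u ≤ pn (β (ξ ⊗ u))
      obtain ⟨φ, hφnorm, hφξ⟩ := exists_dual_vector ℂ ξ (norm_ne_zero_iff.mpr hξ0)
      have hφξ1 : φ ξ = 1 := by rw [hφξ, hξ]; norm_num
      -- the contraction T : L ⊗ F → F
      set T : L ⊗[ℂ] F →ₗ[ℂ] F :=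
        (TensorProduct.lid ℂ F).toLinearMap ∘ₗ LinearMap.rTensor F (φ : L →ₗ[ℂ] ℂ) with hT
      have hTtmul : ∀ (η : L) (y : F), T (η ⊗ₜ[ℂ] y) = φ η • y := by
        intro η y
        simp [hT, LinearMap.rTensor_tmul, TensorProduct.lid_tmul]
      -- rank one map a = φ(·) • ξ
      set a : L →L[ℂ] L := φ.smulRight ξ with ha
      have hanorm : ‖a‖ = 1 := by
        rw [ha, ContinuousLinearMap.norm_smulRight_apply, hφnorm, hξ]; ring
      have haT : ∀ v : L ⊗[ℂ] F, LinearMap.rTensor F (a : L →ₗ[ℂ] L) v = ξ ⊗ₜ[ℂ] T v := by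
        intro v
        induction v using TensorProduct.induction_on with
        | zero => simp
        | add v1 v2 h1 h2 => rw [map_add, h1, h2, map_add, TensorProduct.tmul_add]
        | tmul η y =>
          rw [LinearMap.rTensor_tmul, hTtmul]
          have : (a : L →ₗ[ℂ] L) η = φ η • ξ := rfl
          rw [this, TensorProduct.tmul_smul, TensorProduct.smul_tmul']
      have hTbound : ∀ v : L ⊗[ℂ] F, ‖T v‖ ≤ M v := by
        intro v
        have h1 := hMcontr a v
        rw [haT v, hMund ξ (T v) hξ, hanorm, one_mul] at h1
        exact h1
      -- recovery: lTensor E T (β (ξ ⊗ u)) = u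
      have hrec : ∀ u' : E ⊗[ℂ] F, LinearMap.lTensor E T (β (ξ ⊗ₜ[ℂ] u')) = u' := by
        intro u'
        induction u' using TensorProduct.induction_on with
        | zero => simp [TensorProduct.tmul_zero]
        | add u1 u2 h1 h2 => rw [TensorProduct.tmul_add, map_add, map_add, h1, h2]
        | tmul x y => rw [hβ, LinearMap.lTensor_tmul, hTtmul, hφξ1, one_smul]
      -- conclude
      refine le_pn (β (ξ ⊗ₜ[ℂ] u)) (pf u) ?_
      rintro r ⟨n, x, v, hxv, rfl⟩
      have hudec : u = ∑ i, x i ⊗ₜ[ℂ] T (v i) := by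
        conv_lhs => rw [← hrec u]
        rw [hxv, map_sum]
        exact Finset.sum_congr rfl fun i _ => LinearMap.lTensor_tmul E T (x i) (v i)
      have hmem : (∑ i, ‖x i‖ * ‖T (v i)‖) ∈ {r : ℝ |
          ∃ (n : ℕ) (x : Fin n → E) (y : Fin n → F),
            u = ∑ i, x i ⊗ₜ[ℂ] y i ∧ r = ∑ i, ‖x i‖ * ‖y i‖} :=
        ⟨n, x, fun i => T (v i), hudec, rfl⟩
      have h1 : pf u ≤ ∑ i, ‖x i‖ * ‖T (v i)‖ := by
        rw [hpf]
        exact csInf_le ⟨0, fun r hr => hSfnn u r hr⟩ hmem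
      refine h1.trans (Finset.sum_le_sum fun i _ => ?_)
      exact mul_le_mul_of_nonneg_left (hTbound (v i)) (norm_nonneg _)
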